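/- Domino k-bFDR control: Suppose for every subset S ⊆ [m] with |S| ≥ k there is a {0,1}-valued test φ_S with P(φ_{H0} = 1) ≤ α whenever |H0| ≥ k. Let R be a random rejection set such that on the event {|R| ≥ k}, the marginal set M_k(R) (a k-element subset of R) satisfies: φ_S = 1 for every S ⊇ M_k(R). Then P(M_k(R) ⊆ H0) ≤ α, i.e., k-bFDR(R) ≤ α. -/
import Mathlib

open MeasureTheory Finset

/-- Domino k-bFDR control: if the k-local tests are valid at level α (in particular for
S = H0 when |H0| ≥ k), and pointwise on {|R| ≥ k} the marginal set M_k(R) is a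
k-element subset of R with φ_S = 1 for every S ⊇ M_k(R), then
k-bFDR(R) = P(|R| ≥ k and M_k(R) ⊆ H0) ≤ α. -/
theorem stmt5 {Ω : Type*} [MeasurableSpace Ω] (μ : Measure Ω) [IsProbabilityMeasure μ]
    (m k : ℕ) (H0 : Finset (Fin m)) (φ : Finset (Fin m) → Ω → Bool)
    (R M : Ω → Finset (Fin m)) (α : ℝ)
    (hvalid : k ≤ H0.card → μ {ω | φ H0 ω = true} ≤ ENNReal.ofReal α)
    (hM : ∀ ω, k ≤ (R ω).card →
      M ω ⊆ R ω ∧ (M ω).card = k ∧ ∀ S : Finset (Fin m), M ω ⊆ S → φ S ω = true) :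
    μ {ω | k ≤ (R ω).card ∧ M ω ⊆ H0} ≤ ENNReal.ofReal α := by
  by_cases hne : ∃ ω, k ≤ (R ω).card ∧ M ω ⊆ H0
  · obtain ⟨ω0, hω0⟩ := hne
    have hcard : k ≤ H0.card := by
      have h := hM ω0 hω0.1
      calc k = (M ω0).card := h.2.1.symm
        _ ≤ H0.card := card_le_card hω0.2
    refine le_trans (μ.mono ?_) (hvalid hcard)
    intro ω hω
    exact (hM ω hω.1).2.2 H0 hω.2
  · have : {ω | k ≤ (R ω).card ∧ M ω ⊆ H0} = ∅ := by
      ext ω; simp only [Set.mem_setOf_eq, Set.mem_empty_iff_false, iff_false]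
      exact fun h => hne ⟨ω, h⟩
    rw [this]; simp
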